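/- Let f: ℂ[x,y] → ℂ[x,y] be a ℂ-algebra endomorphism with p = f(x), q = f(y), Jac(p,q) ∈ ℂ*, and assume ℂ(p,q) ∩ ℂ[x,y] = ℂ[p,q] and that there exists w ∈ ℂ[x,y] with ℂ[p,q,w] = ℂ[x,y] whenever x ∈ ℂ[p,q] (Formanek's automorphism theorem). If ℂ[p,q] is factorially closed in ℂ[x,y], then f is an automorphism, i.e., ℂ[p,q] = ℂ[x,y]. -/

import Mathlib

open MvPolynomial

noncomputable section

/-- Chain rule for `pderiv` through `aeval`. -/
lemma pderiv_aeval_fin2 (g : Fin 2 → MvPolynomial (Fin 2) ℂ) (j : Fin 2)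
    (F : MvPolynomial (Fin 2) ℂ) :
    pderiv j (aeval g F) = ∑ i : Fin 2, aeval g (pderiv i F) * pderiv j (g i) := by
  induction F using MvPolynomial.induction_on with
  | C a => simp
  | add r s hr hs =>
      simp only [map_add, hr, hs, Fin.sum_univ_two]
      ring
  | mul_X r i hr =>
      simp only [map_mul, aeval_X, pderiv_mul, hr, Fin.sum_univ_two] at *
      fin_cases i <;>
        simp [pderiv_X_self, pderiv_X_of_ne, Matrix.cons_val_zero, Matrix.cons_val_one] <;>
        ring

lemma coeff_pderiv (i : Fin 2) (f : MvPolynomial (Fin 2) ℂ) (t : Fin 2 →₀ ℕ) :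
    coeff t (pderiv i f) = ((t i : ℂ) + 1) * coeff (t + Finsupp.single i 1) f := by
  induction f using MvPolynomial.induction_on' with
  | add r s hr hs => simp [map_add, hr, hs, mul_add]
  | monomial s a =>
      rw [pderiv_monomial]
      simp only [coeff_monomial]
      by_cases h : s = t + Finsupp.single i 1
      · subst h
        rw [if_pos (add_tsub_cancel_right _ _), if_pos rfl]
        simp [Finsupp.add_apply, Finsupp.single_eq_same]
        ring
      · rw [if_neg h]
        by_cases h2 : s - Finsupp.single i 1 = t
        · rw [if_pos h2]
          have hsi : s i = 0 := by
            by_contra hne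
            apply h
            rw [← h2, tsub_add_cancel_of_le]
            rwa [Finsupp.single_le_iff, Nat.one_le_iff_ne_zero]
          simp [hsi]
        · rw [if_neg h2, mul_zero]

lemma totalDegree_pderiv_le (i : Fin 2) (f : MvPolynomial (Fin 2) ℂ) {n : ℕ}
    (h : f.totalDegree ≤ n + 1) : (pderiv i f).totalDegree ≤ n := by
  apply Finset.sup_le
  intro m hm
  have hc : coeff m (pderiv i f) ≠ 0 := mem_support_iff.mp hm
  rw [coeff_pderiv] at hc
  have h2 : coeff (m + Finsupp.single i 1) f ≠ 0 := by
    intro h0; rw [h0, mul_zero] at hc; exact hc rfl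
  have h3 := le_totalDegree (p := f) (mem_support_iff.mpr h2)
  have h4 : ((m + Finsupp.single i 1).sum fun _ e => e) = (m.sum fun _ e => e) + 1 := by
    rw [Finsupp.sum_add_index' (fun _ => rfl) (fun _ _ _ => rfl)]
    simp
  omega

lemma eq_zero_of_pderiv_eq_zero (f : MvPolynomial (Fin 2) ℂ)
    (h0 : pderiv 0 f = 0) (h1 : pderiv 1 f = 0) : f = C (coeff 0 f) := by
  ext m
  rw [coeff_C]
  by_cases hm : 0 = m
  · rw [if_pos hm, hm]
  · rw [if_neg hm]
    have : ∃ x : Fin 2, m x ≠ 0 := by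
      by_contra hx
      push_neg at hx
      exact hm (Finsupp.ext fun a => (hx a).symm)
    obtain ⟨x, hx⟩ := this
    have key := coeff_pderiv x f (m - Finsupp.single x 1)
    have hrw : (m - Finsupp.single x 1) + Finsupp.single x 1 = m := by
      rw [tsub_add_cancel_of_le]
      rwa [Finsupp.single_le_iff, Nat.one_le_iff_ne_zero]
    rw [hrw] at key
    have hz : pderiv x f = 0 := by fin_cases x <;> assumption
    rw [hz] at key
    simp only [coeff_zero] at key
    exact (mul_eq_zero.mp key.symm).resolve_left (Nat.cast_add_one_ne_zero _)

lemma eq_C_of_totalDegree_eq_zero {F : MvPolynomial (Fin 2) ℂ} (h : F.totalDegree = 0) :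
    F = C (coeff 0 F) := by
  ext m
  rw [coeff_C]
  by_cases hm : 0 = m
  · rw [if_pos hm, hm]
  · rw [if_neg hm]
    by_contra hc
    exact hm (Finsupp.ext fun x =>
      ((totalDegree_eq_zero_iff _ F).mp h m (mem_support_iff.mpr hc) x).symm)

lemma aeval_injective_of_jacobian {p q : MvPolynomial (Fin 2) ℂ}
    {c : ℂ} (hc : c ≠ 0)
    (hJ : pderiv 0 p * pderiv 1 q - pderiv 1 p * pderiv 0 q = C c) :
    Function.Injective (aeval (R := ℂ) ![p, q]) := by
  have hCc : (C c : MvPolynomial (Fin 2) ℂ) ≠ 0 := fun h => hc (by simpa using h)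
  suffices H : ∀ n (F : MvPolynomial (Fin 2) ℂ), F.totalDegree ≤ n →
      aeval ![p, q] F = 0 → F = 0 by
    intro a b hab
    have h1 : aeval ![p, q] (a - b) = 0 := by rw [map_sub, hab, sub_self]
    exact sub_eq_zero.mp (H (a - b).totalDegree (a - b) le_rfl h1)
  intro n
  induction n with
  | zero =>
      intro F hF h0
      rw [eq_C_of_totalDegree_eq_zero (Nat.le_zero.mp hF)] at h0 ⊢
      rw [aeval_C] at h0
      have : coeff 0 F = 0 := by simpa using h0
      rw [this, map_zero]
  | succ n ih =>
      intro F hF h0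
      have E : ∀ j, aeval ![p, q] (pderiv 0 F) * pderiv j p
          + aeval ![p, q] (pderiv 1 F) * pderiv j q = 0 := by
        intro j
        have := pderiv_aeval_fin2 ![p, q] j F
        rw [h0, map_zero] at this
        simpa [Fin.sum_univ_two] using this.symm
      set A0 := aeval ![p, q] (pderiv 0 F) with hA0def
      set A1 := aeval ![p, q] (pderiv 1 F) with hA1def
      have E0 := E 0
      have E1 := E 1
      have hA0 : A0 = 0 := by
        have h5 : A0 * C c = 0 := by
          linear_combination (-A0) * hJ + pderiv 1 q * E0 - pderiv 0 q * E1
        exact (mul_eq_zero.mp h5).resolve_right hCc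
      have hA1 : A1 = 0 := by
        have h5 : A1 * C c = 0 := by
          linear_combination (-A1) * hJ + pderiv 0 p * E1 - pderiv 1 p * E0
        exact (mul_eq_zero.mp h5).resolve_right hCc
      have hp0 : pderiv 0 F = 0 := ih _ (totalDegree_pderiv_le 0 F hF) hA0
      have hp1 : pderiv 1 F = 0 := ih _ (totalDegree_pderiv_le 1 F hF) hA1
      rw [eq_zero_of_pderiv_eq_zero F hp0 hp1] at h0 ⊢
      rw [aeval_C] at h0
      have : coeff 0 F = 0 := by simpa using h0
      rw [this, map_zero]

lemma finsupp_apply_le_sum (s : Fin 2 →₀ ℕ) (i : Fin 2) : s i ≤ s.sum fun _ e => e := by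
  by_cases h : i ∈ s.support
  · exact Finset.single_le_sum (fun _ _ => Nat.zero_le _) h
  · simp [Finsupp.notMem_support_iff.mp h]

set_option maxHeartbeats 1000000 in
lemma not_algebraicIndependent_three (g : Fin 3 → MvPolynomial (Fin 2) ℂ) :
    ¬ AlgebraicIndependent ℂ g := by
  intro h
  have hinj : Function.Injective (aeval (R := ℂ) g) :=
    algebraicIndependent_iff_injective_aeval.mp h
  set d : ℕ := (g 0).totalDegree + (g 1).totalDegree + (g 2).totalDegree + 1 with hd
  have hd1 : 1 ≤ d := by omega
  have hdg : ∀ i, (g i).totalDegree ≤ d := by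
    intro i
    fin_cases i
    exacts [(by omega : (g 0).totalDegree ≤ d), (by omega : (g 1).totalDegree ≤ d),
      (by omega : (g 2).totalDegree ≤ d)]
  set m : ℕ := 9 * d ^ 2 with hm
  set M : ℕ := d * (3 * m) with hM
  set ι := Fin (m + 1) × Fin (m + 1) × Fin (m + 1) with hι
  -- the exponent map
  let e : ι → (Fin 3 →₀ ℕ) := fun t =>
    Finsupp.single 0 (t.1 : ℕ) + Finsupp.single 1 (t.2.1 : ℕ) + Finsupp.single 2 (t.2.2 : ℕ)
  have he_apply : ∀ t : ι, (e t) 0 = (t.1 : ℕ) ∧ (e t) 1 = (t.2.1 : ℕ) ∧ (e t) 2 = (t.2.2 : ℕ) := by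
    intro t
    refine ⟨?_, ?_, ?_⟩ <;>
      simp [e, Finsupp.add_apply, Finsupp.single_apply, Fin.ext_iff]
  have he_inj : Function.Injective e := by
    intro t1 t2 ht
    obtain ⟨h10, h11, h12⟩ := he_apply t1
    obtain ⟨h20, h21, h22⟩ := he_apply t2
    rw [ht] at h10 h11 h12
    refine Prod.ext (Fin.ext ?_) (Prod.ext (Fin.ext ?_) (Fin.ext ?_))
    · exact h10.symm.trans h20
    · exact h11.symm.trans h21
    · exact h12.symm.trans h22
  -- the monomial family in three variables
  let w : ι → MvPolynomial (Fin 3) ℂ := fun t => monomial (e t) 1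
  have hw_li : LinearIndependent ℂ w := by
    have h2 := (basisMonomials (Fin 3) ℂ).linearIndependent.comp e he_inj
    have hw : w = ⇑(basisMonomials (Fin 3) ℂ) ∘ e := by
      funext t; simp [w, coe_basisMonomials]
    rw [hw]; exact h2
  -- images
  let u : ι → MvPolynomial (Fin 2) ℂ := fun t => aeval g (w t)
  have hu_eq : ∀ t : ι, u t = g 0 ^ (t.1 : ℕ) * g 1 ^ (t.2.1 : ℕ) * g 2 ^ (t.2.2 : ℕ) := by
    intro t
    show aeval g (monomial (e t) 1) = _
    have : monomial (e t) (1 : ℂ) =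
        X 0 ^ (t.1 : ℕ) * X 1 ^ (t.2.1 : ℕ) * X 2 ^ (t.2.2 : ℕ) := by
      simp only [X_pow_eq_monomial, monomial_mul, one_mul, e]
    rw [this]
    simp
  have hu_li : LinearIndependent ℂ u := by
    have := hw_li.map' (aeval g).toLinearMap (LinearMap.ker_eq_bot.mpr hinj)
    exact this
  have hu_mem : ∀ t : ι, u t ∈ restrictTotalDegree (Fin 2) ℂ M := by
    intro t
    rw [mem_restrictTotalDegree, hu_eq]
    have h1 : ((g 0 ^ (t.1 : ℕ) * g 1 ^ (t.2.1 : ℕ)) * g 2 ^ (t.2.2 : ℕ)).totalDegree ≤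
        (t.1 : ℕ) * d + (t.2.1 : ℕ) * d + (t.2.2 : ℕ) * d := by
      refine le_trans (totalDegree_mul _ _) ?_
      refine add_le_add (le_trans (totalDegree_mul _ _) (add_le_add ?_ ?_)) ?_ <;>
        refine le_trans (totalDegree_pow _ _) (Nat.mul_le_mul_left _ (hdg _))
    refine le_trans h1 ?_
    have ha : (t.1 : ℕ) ≤ m := Nat.lt_succ_iff.mp t.1.isLt
    have hb : (t.2.1 : ℕ) ≤ m := Nat.lt_succ_iff.mp t.2.1.isLt
    have hc : (t.2.2 : ℕ) ≤ m := Nat.lt_succ_iff.mp t.2.2.isLt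
    calc (t.1 : ℕ) * d + (t.2.1 : ℕ) * d + (t.2.2 : ℕ) * d
        ≤ m * d + m * d + m * d := by
          exact add_le_add (add_le_add (Nat.mul_le_mul_right _ ha)
            (Nat.mul_le_mul_right _ hb)) (Nat.mul_le_mul_right _ hc)
      _ = d * (3 * m) := by ring
  let v : ι → restrictTotalDegree (Fin 2) ℂ M := fun t => ⟨u t, hu_mem t⟩
  have hv_li : LinearIndependent ℂ v := by
    apply LinearIndependent.of_comp (restrictTotalDegree (Fin 2) ℂ M).subtype
    exact hu_li
  have hcard : Fintype.card ι ≤ Module.finrank ℂ (restrictTotalDegree (Fin 2) ℂ M) :=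
    hv_li.fintype_card_le_finrank
  -- upper bound on the finrank
  set S : Set (Fin 2 →₀ ℕ) := { n | (n.sum fun _ e => e) ≤ M } with hS
  let φ : S → Fin (M + 1) × Fin (M + 1) := fun s =>
    (⟨s.1 0, Nat.lt_succ_of_le (le_trans (finsupp_apply_le_sum s.1 0) s.2)⟩,
     ⟨s.1 1, Nat.lt_succ_of_le (le_trans (finsupp_apply_le_sum s.1 1) s.2)⟩)
  have hφ_inj : Function.Injective φ := by
    intro s1 s2 hs
    have h0 : s1.1 0 = s2.1 0 := congrArg (fun x => (x.1 : ℕ)) hs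
    have h1 : s1.1 1 = s2.1 1 := congrArg (fun x => (x.2 : ℕ)) hs
    apply Subtype.ext
    ext i
    fin_cases i
    · exact h0
    · exact h1
  letI : Fintype S := Fintype.ofInjective φ hφ_inj
  have hfin : Module.finrank ℂ (restrictTotalDegree (Fin 2) ℂ M) = Fintype.card S :=
    Module.finrank_eq_card_basis (basisRestrictSupport ℂ S)
  have hScard : Fintype.card S ≤ (M + 1) * (M + 1) := by
    have := Fintype.card_le_of_injective φ hφ_inj
    simpa using this
  have hιcard : Fintype.card ι = (m + 1) * ((m + 1) * (m + 1)) := by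
    simp [hι, Fintype.card_prod, Fintype.card_fin]
  have hfinal : (m + 1) * ((m + 1) * (m + 1)) ≤ (M + 1) * (M + 1) := by
    rw [← hιcard]
    exact le_trans hcard (le_trans (le_of_eq hfin) hScard)
  rw [hm, hM, hm] at hfinal
  nlinarith [hd1, sq_nonneg d, hfinal]
lemma mem_adjoin_of_eval_eq_zero (p q z : MvPolynomial (Fin 2) ℂ) (hz : z ≠ 0)
    (hfc : ∀ a₁ a₂ : MvPolynomial (Fin 2) ℂ,
      a₁ * a₂ ∈ Algebra.adjoin ℂ ({p, q} : Set (MvPolynomial (Fin 2) ℂ)) → a₁ * a₂ ≠ 0 →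
      a₁ ∈ Algebra.adjoin ℂ ({p, q} : Set (MvPolynomial (Fin 2) ℂ)) ∧
      a₂ ∈ Algebra.adjoin ℂ ({p, q} : Set (MvPolynomial (Fin 2) ℂ))) :
    ∀ G : Polynomial (MvPolynomial (Fin 2) ℂ), G ≠ 0 →
      (∀ n, G.coeff n ∈ Algebra.adjoin ℂ ({p, q} : Set (MvPolynomial (Fin 2) ℂ))) →
      Polynomial.eval z G = 0 → z ∈ Algebra.adjoin ℂ ({p, q} : Set (MvPolynomial (Fin 2) ℂ)) := by
  suffices H : ∀ n, ∀ G : Polynomial (MvPolynomial (Fin 2) ℂ), G.natDegree = n → G ≠ 0 →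
      (∀ k, G.coeff k ∈ Algebra.adjoin ℂ ({p, q} : Set (MvPolynomial (Fin 2) ℂ))) →
      Polynomial.eval z G = 0 →
      z ∈ Algebra.adjoin ℂ ({p, q} : Set (MvPolynomial (Fin 2) ℂ)) by
    intro G hne hco hev
    exact H G.natDegree G rfl hne hco hev
  intro n
  induction n using Nat.strong_induction_on with
  | _ n ih =>
    intro G hGdeg hGne hco hev
    have hkey := Polynomial.X_mul_divX_add G
    have hev' := congrArg (Polynomial.eval z) hkey
    rw [Polynomial.eval_add, Polynomial.eval_mul, Polynomial.eval_X, Polynomial.eval_C, hev]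
      at hev'
    by_cases h0 : G.coeff 0 = 0
    · have hGdeg_pos : 0 < G.natDegree := by
        rcases Nat.eq_zero_or_pos G.natDegree with h | h
        · exact absurd (by rw [Polynomial.eq_C_of_natDegree_eq_zero h, h0, map_zero])
            hGne
        · exact h
      have hdiv : G = Polynomial.X * G.divX := by
        conv_lhs => rw [← hkey]
        rw [h0, map_zero, add_zero]
      have hdX_ne : G.divX ≠ 0 := by
        intro hh; rw [hh, mul_zero] at hdiv; exact hGne hdiv
      have hz' : z * Polynomial.eval z G.divX = 0 := by
        rw [h0] at hev'; simpa using hev'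
      have hevd : Polynomial.eval z G.divX = 0 :=
        (mul_eq_zero.mp hz').resolve_left hz
      refine ih G.divX.natDegree ?_ G.divX rfl hdX_ne ?_ hevd
      · rw [Polynomial.natDegree_divX_eq_natDegree_tsub_one, ← hGdeg]; omega
      · intro k; rw [Polynomial.coeff_divX]; exact hco (k + 1)
    · have heq : z * (-Polynomial.eval z G.divX) = G.coeff 0 := by
        linear_combination -hev'
      have hmem : z * (-Polynomial.eval z G.divX)
          ∈ Algebra.adjoin ℂ ({p, q} : Set (MvPolynomial (Fin 2) ℂ)) := by
        rw [heq]; exact hco 0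
      have hne : z * (-Polynomial.eval z G.divX) ≠ 0 := by rw [heq]; exact h0
      exact (hfc _ _ hmem hne).1

lemma range_pair (p q : MvPolynomial (Fin 2) ℂ) : Set.range ![p, q] = {p, q} := by
  ext z
  constructor
  · rintro ⟨i, rfl⟩
    fin_cases i
    · exact Or.inl rfl
    · exact Or.inr rfl
  · rintro (rfl | rfl)
    · exact ⟨0, rfl⟩
    · exact ⟨1, rfl⟩

lemma var_mem_adjoin (p q : MvPolynomial (Fin 2) ℂ)
    (hinj : Function.Injective (aeval (R := ℂ) ![p, q]))
    (hfc : ∀ a₁ a₂ : MvPolynomial (Fin 2) ℂ,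
      a₁ * a₂ ∈ Algebra.adjoin ℂ ({p, q} : Set (MvPolynomial (Fin 2) ℂ)) → a₁ * a₂ ≠ 0 →
      a₁ ∈ Algebra.adjoin ℂ ({p, q} : Set (MvPolynomial (Fin 2) ℂ)) ∧
      a₂ ∈ Algebra.adjoin ℂ ({p, q} : Set (MvPolynomial (Fin 2) ℂ)))
    (k : Fin 2) : X k ∈ Algebra.adjoin ℂ ({p, q} : Set (MvPolynomial (Fin 2) ℂ)) := by
  -- get a nonzero algebraic relation for X k over p, q
  have hnotinj : ¬ Function.Injective (aeval (R := ℂ) ![X k, p, q]) := fun hI =>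
    not_algebraicIndependent_three _ (algebraicIndependent_iff_injective_aeval.mpr hI)
  rw [Function.not_injective_iff] at hnotinj
  obtain ⟨a, b, hab, hne⟩ := hnotinj
  set F := a - b with hF
  have hFne : F ≠ 0 := sub_ne_zero.mpr hne
  have hFev : aeval ![X k, p, q] F = 0 := by rw [hF, map_sub, hab, sub_self]
  -- transfer through finSuccEquiv
  have key : (Polynomial.evalRingHom (X k : MvPolynomial (Fin 2) ℂ)).comp
      ((Polynomial.mapRingHom (aeval (R := ℂ) ![p, q]).toRingHom).comp
        ((finSuccEquiv ℂ 2 : MvPolynomial (Fin 3) ℂ ≃ₐ[ℂ] _) :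
          MvPolynomial (Fin 3) ℂ →+* Polynomial (MvPolynomial (Fin 2) ℂ)))
      = ((aeval (R := ℂ) ![X k, p, q]).toRingHom :
          MvPolynomial (Fin 3) ℂ →+* MvPolynomial (Fin 2) ℂ) := by
    apply MvPolynomial.ringHom_ext
    · intro r
      simp [finSuccEquiv_apply]
    · intro i
      refine Fin.cases ?_ ?_ i
      · simp [finSuccEquiv_X_zero]
      · intro j
        simp only [RingHom.coe_comp, Function.comp_apply, AlgEquiv.coe_ringHom_commutes,
          RingHom.coe_coe, finSuccEquiv_X_succ, Polynomial.coe_mapRingHom,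
          Polynomial.map_C, Polynomial.evalRingHom, Polynomial.eval_C,
          AlgHom.toRingHom_eq_coe, aeval_X]
        rw [Polynomial.coe_eval₂RingHom, Polynomial.eval₂_C, RingHom.id_apply,
          Matrix.cons_val_succ]
  set G : Polynomial (MvPolynomial (Fin 2) ℂ) :=
    Polynomial.map (aeval (R := ℂ) ![p, q]).toRingHom (finSuccEquiv ℂ 2 F) with hG
  have hGev : Polynomial.eval (X k : MvPolynomial (Fin 2) ℂ) G = 0 := by
    have := congrArg (fun φ => φ F) key
    simpa [hG] using this.trans hFev
  have hGne : G ≠ 0 := by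
    intro hzero
    apply hFne
    have h1 : finSuccEquiv ℂ 2 F = 0 :=
      Polynomial.map_injective _ hinj (by rw [Polynomial.map_zero]; exact hzero)
    exact (map_eq_zero_iff _ (finSuccEquiv ℂ 2).injective).mp h1
  have hGco : ∀ n, G.coeff n ∈ Algebra.adjoin ℂ ({p, q} : Set (MvPolynomial (Fin 2) ℂ)) := by
    intro n
    rw [hG, Polynomial.coeff_map]
    have : (aeval (R := ℂ) ![p, q]) ((finSuccEquiv ℂ 2 F).coeff n)
        ∈ (aeval (R := ℂ) ![p, q]).range := ⟨_, rfl⟩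
    rwa [← Algebra.adjoin_range_eq_range_aeval, range_pair] at this
  exact mem_adjoin_of_eval_eq_zero p q (X k) (X_ne_zero k) hfc G hGne hGco hGev

/-- If `f` is a `ℂ`-endomorphism of `ℂ[x,y]` with invertible Jacobian and `ℂ[p,q]` is
factorially closed in `ℂ[x,y]`, then (assuming Wang's theorem and Formanek's automorphism
theorem) `f` is an automorphism, i.e. `ℂ[p,q] = ℂ[x,y]`. -/
theorem factorially_closed_implies_automorphism
    (f : MvPolynomial (Fin 2) ℂ →ₐ[ℂ] MvPolynomial (Fin 2) ℂ)
    (p q : MvPolynomial (Fin 2) ℂ) (hp : p = f (X 0)) (hq : q = f (X 1))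
    (hJac : ∃ c : ℂ, c ≠ 0 ∧
      pderiv 0 p * pderiv 1 q - pderiv 1 p * pderiv 0 q = C c)
    (P Q : FractionRing (MvPolynomial (Fin 2) ℂ))
    (hP : P = algebraMap (MvPolynomial (Fin 2) ℂ) _ p)
    (hQ : Q = algebraMap (MvPolynomial (Fin 2) ℂ) _ q)
    -- Wang's intersection theorem:
    (hWang : (IntermediateField.adjoin ℂ {P, Q} : Set (FractionRing (MvPolynomial (Fin 2) ℂ)))
        ∩ Set.range (algebraMap (MvPolynomial (Fin 2) ℂ) (FractionRing (MvPolynomial (Fin 2) ℂ)))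
      = (Algebra.adjoin ℂ ({P, Q} : Set (FractionRing (MvPolynomial (Fin 2) ℂ))) :
          Set (FractionRing (MvPolynomial (Fin 2) ℂ))))
    -- Formanek's automorphism theorem:
    (hFormanek : (∃ w : MvPolynomial (Fin 2) ℂ,
        Algebra.adjoin ℂ ({p, q, w} : Set (MvPolynomial (Fin 2) ℂ)) = ⊤) →
      Algebra.adjoin ℂ ({p, q} : Set (MvPolynomial (Fin 2) ℂ)) = ⊤)
    -- ℂ[p,q] is factorially closed in ℂ[x,y]:
    (hfc : ∀ a₁ a₂ : MvPolynomial (Fin 2) ℂ,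
      a₁ * a₂ ∈ Algebra.adjoin ℂ ({p, q} : Set (MvPolynomial (Fin 2) ℂ)) → a₁ * a₂ ≠ 0 →
      a₁ ∈ Algebra.adjoin ℂ ({p, q} : Set (MvPolynomial (Fin 2) ℂ)) ∧
      a₂ ∈ Algebra.adjoin ℂ ({p, q} : Set (MvPolynomial (Fin 2) ℂ))) :
    Algebra.adjoin ℂ ({p, q} : Set (MvPolynomial (Fin 2) ℂ)) = ⊤ := by
  obtain ⟨c, hc, hJ⟩ := hJac
  have hinj := aeval_injective_of_jacobian hc hJ
  have hx := var_mem_adjoin p q hinj hfc 0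
  have hy := var_mem_adjoin p q hinj hfc 1
  rw [eq_top_iff, ← MvPolynomial.adjoin_range_X]
  apply Algebra.adjoin_le
  rintro _ ⟨i, rfl⟩
  fin_cases i
  · exact hx
  · exact hy
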